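/- Let T, m, n be positive integers, let U₋ ∈ ℝ^{m×T}, Ξ₋ ∈ ℝ^{n×T}, Ξ₊ ∈ ℝ^{n×T}, Δ ∈ ℝ^{n×p}, and let W := [Ξ₋; U₋] ∈ ℝ^{(n+m)×T}. Suppose there exist matrices A ∈ ℝ^{n×n}, B ∈ ℝ^{n×m} and N ∈ ℝ^{n×T} such that Ξ₊ = A Ξ₋ + B U₋ + N and N Nᵀ ⪯ Δ Δᵀ. Define Ψ := W Wᵀ, Υ := −W Ξ₊ᵀ, Σ := Ξ₊ Ξ₊ᵀ − Δ Δᵀ. If there exist a symmetric P ≻ 0 and Y ∈ ℝ^{m×n} such that the block matrix [[−Σ, Υᵀ − Zᵀ], [Υ − Z, −Ψ]] with Z := [P; Y] is negative definite, then with K := Y P⁻¹ one has (Ā + B̄ K) P + P (Ā + B̄ K)ᵀ ≺ 0 for every pair (Ā, B̄) with Φᵀ := [Ā B̄] satisfying Σ + Υᵀ Φ + Φᵀ Υ + Φᵀ Ψ Φ ⪯ 0; in particular, A + B K is Hurwitz. -/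

import Mathlib

open Matrix

/-- Congruence of a positive definite matrix by an injective (as mulVec) matrix. -/
lemma congr_posDef {k l : Type*} [Fintype k] [Fintype l]
    {M : Matrix k k ℝ} (hM : M.PosDef) (B : Matrix k l ℝ)
    (hB : ∀ x : l → ℝ, x ≠ 0 → B *ᵥ x ≠ 0) :
    (Bᵀ * M * B).PosDef := by
  rw [← conjTranspose_eq_transpose_of_trivial]
  refine PosDef.of_dotProduct_mulVec_pos (isHermitian_conjTranspose_mul_mul B hM.1) fun x hx => ?_
  simpa only [star_mulVec, dotProduct_mulVec, vecMul_vecMul] using hM.dotProduct_mulVec_pos (hB x hx)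

/-- real PosDef complexified: real part of the quadratic form is positive. -/
lemma re_quad_pos {k : Type*} [Fintype k] {R : Matrix k k ℝ} (hR : R.PosDef)
    {v : k → ℂ} (hv : v ≠ 0) :
    0 < (star v ⬝ᵥ (R.map (algebraMap ℝ ℂ)) *ᵥ v).re := by
  classical
  set a : k → ℝ := fun i => (v i).re with ha
  set b : k → ℝ := fun i => (v i).im with hb
  have key : (star v ⬝ᵥ (R.map (algebraMap ℝ ℂ)) *ᵥ v).re
      = a ⬝ᵥ R *ᵥ a + b ⬝ᵥ R *ᵥ b := by
    simp only [dotProduct, mulVec, Pi.star_apply, map_apply, Complex.re_sum, Complex.im_sum,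
      Complex.mul_re, Complex.mul_im, Complex.star_def, Complex.conj_re, Complex.conj_im,
      Complex.coe_algebraMap, Complex.ofReal_re, Complex.ofReal_im]
    rw [← Finset.sum_add_distrib]
    refine Finset.sum_congr rfl fun i _ => ?_
    simp only [ha, hb, zero_mul, mul_zero, sub_zero, add_zero]
    ring
  have h1 : ∀ c : k → ℝ, 0 ≤ c ⬝ᵥ R *ᵥ c := fun c => by
    simpa using hR.posSemidef.dotProduct_mulVec_nonneg c
  have h2 : ∀ c : k → ℝ, c ≠ 0 → 0 < c ⬝ᵥ R *ᵥ c := fun c hc => by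
    simpa using hR.dotProduct_mulVec_pos hc
  rw [key]
  by_cases hA : a = 0
  · have hBne : b ≠ 0 := by
      intro hB0
      apply hv
      funext i
      exact Complex.ext (congrFun hA i) (congrFun hB0 i)
    have := h2 b hBne
    have := h1 a
    linarith
  · have := h2 a hA
    have := h1 b
    linarith

lemma exists_transpose_eigenvector {k : Type*} [Fintype k] [DecidableEq k]
    (M : Matrix k k ℂ) {μ : ℂ} (h : μ ∈ spectrum ℂ M) :
    ∃ v : k → ℂ, v ≠ 0 ∧ Mᵀ *ᵥ v = μ • v := by
  have ht : μ ∈ spectrum ℂ Mᵀ := by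
    rw [spectrum.mem_iff] at h ⊢
    intro hU
    apply h
    rw [Matrix.isUnit_iff_isUnit_det] at hU ⊢
    have hEq : (algebraMap ℂ (Matrix k k ℂ) μ - Mᵀ) = (algebraMap ℂ (Matrix k k ℂ) μ - M)ᵀ := by
      simp [Algebra.algebraMap_eq_smul_one, transpose_sub, transpose_smul]
    rw [hEq, det_transpose] at hU
    exact hU
  rw [← AlgEquiv.spectrum_eq (Matrix.toLinAlgEquiv (Pi.basisFun ℂ k)) Mᵀ,
      ← Module.End.hasEigenvalue_iff_mem_spectrum] at ht
  obtain ⟨v, hv1, hv2⟩ := ht.exists_hasEigenvector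
  refine ⟨v, hv2, ?_⟩
  have h4 := Module.End.mem_eigenspace_iff.mp hv1
  have h5 : ⇑((Pi.basisFun ℂ k).repr v) = v := by ext i; simp
  simpa [h5, Matrix.toLinAlgEquiv_apply, Pi.basisFun_repr, Pi.basisFun_apply,
    ← Pi.single_smul, Finset.univ_sum_single] using h4

/-- Lyapunov inequality implies all eigenvalues have negative real part. -/
lemma lyap_spectrum {k : Type*} [Fintype k] [DecidableEq k]
    {M Pm : Matrix k k ℝ} (hP : Pm.PosDef)
    (hQ : (-(M * Pm + Pm * Mᵀ)).PosDef) :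
    ∀ μ ∈ spectrum ℂ (M.map (algebraMap ℝ ℂ)), μ.re < 0 := by
  intro μ hμ
  obtain ⟨v, hv, hev⟩ := exists_transpose_eigenvector _ hμ
  set f := algebraMap ℝ ℂ
  set Mc := M.map f with hMc
  set Pc := Pm.map f with hPc
  have hPpos : 0 < (star v ⬝ᵥ Pc *ᵥ v).re := re_quad_pos hP hv
  have hQpos : 0 < (star v ⬝ᵥ ((-(M * Pm + Pm * Mᵀ)).map f) *ᵥ v).re := re_quad_pos hQ hv
  have hvecMul : star v ᵥ* Mc = star μ • star v := by
    have h2 : (Mcᵀ)ᴴ = Mc := by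
      ext i j
      simp [hMc, conjTranspose_apply, map_apply, f]
    have h1 := star_mulVec (Mcᵀ) v
    rw [h2] at h1
    rw [← h1, hev, star_smul]
  have hmap : ((-(M * Pm + Pm * Mᵀ)).map f) = -(Mc * Pc + Pc * Mcᵀ) := by
    ext i j
    simp [hMc, hPc, mul_apply, map_apply, map_sum, Matrix.map_mul, Finset.sum_add_distrib]
  have hcomp : star v ⬝ᵥ (Mc * Pc + Pc * Mcᵀ) *ᵥ v
      = star μ * (star v ⬝ᵥ Pc *ᵥ v) + μ * (star v ⬝ᵥ Pc *ᵥ v) := by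
    rw [add_mulVec, dotProduct_add]
    congr 1
    · rw [← mulVec_mulVec, dotProduct_mulVec, hvecMul, smul_dotProduct, smul_eq_mul]
    · rw [← mulVec_mulVec, hev, mulVec_smul, dotProduct_smul, smul_eq_mul]
  rw [hmap] at hQpos
  have hre : (star v ⬝ᵥ (Mc * Pc + Pc * Mcᵀ) *ᵥ v).re
      = 2 * μ.re * (star v ⬝ᵥ Pc *ᵥ v).re := by
    rw [hcomp]
    simp [Complex.add_re, Complex.mul_re, Complex.star_def]
    ring
  have hneg : (star v ⬝ᵥ (-(Mc * Pc + Pc * Mcᵀ)) *ᵥ v).re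
      = -(star v ⬝ᵥ (Mc * Pc + Pc * Mcᵀ) *ᵥ v).re := by
    rw [neg_mulVec, dotProduct_neg, Complex.neg_re]
  rw [hneg, hre] at hQpos
  nlinarith

/-- Feasibility of the data-based LMI yields a gain `K = Y P⁻¹` which quadratically
stabilizes every system consistent with the noisy data; in particular `A + B K` is
Hurwitz for the true system. -/
theorem stmt_7 (T m n p : ℕ) (hT : 0 < T) (hm : 0 < m) (hn : 0 < n)
    (Um : Matrix (Fin m) (Fin T) ℝ)
    (Xim Xip : Matrix (Fin n) (Fin T) ℝ)
    (Δ : Matrix (Fin n) (Fin p) ℝ)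
    (W : Matrix (Fin n ⊕ Fin m) (Fin T) ℝ) (hW : W = fromRows Xim Um)
    (A : Matrix (Fin n) (Fin n) ℝ) (B : Matrix (Fin n) (Fin m) ℝ)
    (N : Matrix (Fin n) (Fin T) ℝ)
    (hdata : Xip = A * Xim + B * Um + N)
    (hN : (Δ * Δᵀ - N * Nᵀ).PosSemidef)
    (Psi : Matrix (Fin n ⊕ Fin m) (Fin n ⊕ Fin m) ℝ) (hPsi : Psi = W * Wᵀ)
    (Ups : Matrix (Fin n ⊕ Fin m) (Fin n) ℝ) (hUps : Ups = -(W * Xipᵀ))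
    (Sg : Matrix (Fin n) (Fin n) ℝ) (hSg : Sg = Xip * Xipᵀ - Δ * Δᵀ)
    (P : Matrix (Fin n) (Fin n) ℝ) (Y : Matrix (Fin m) (Fin n) ℝ)
    (hP : P.PosDef)
    (hLMI : (-(fromBlocks (-Sg) (Upsᵀ - (fromRows P Y)ᵀ)
        (Ups - fromRows P Y) (-Psi))).PosDef)
    (K : Matrix (Fin m) (Fin n) ℝ) (hK : K = Y * P⁻¹) :
    (∀ (Ab : Matrix (Fin n) (Fin n) ℝ) (Bb : Matrix (Fin n) (Fin m) ℝ),
      (-(Sg + Upsᵀ * (fromCols Ab Bb)ᵀ + fromCols Ab Bb * Ups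
          + fromCols Ab Bb * Psi * (fromCols Ab Bb)ᵀ)).PosSemidef →
      (-((Ab + Bb * K) * P + P * (Ab + Bb * K)ᵀ)).PosDef)
    ∧ (∀ μ ∈ spectrum ℂ ((A + B * K).map (algebraMap ℝ ℂ)), μ.re < 0) := by
  have hPsymm : Pᵀ = P := (conjTranspose_eq_transpose_of_trivial P) ▸ hP.1
  have hKP : K * P = Y := by
    rw [hK, Matrix.mul_assoc, Matrix.nonsing_inv_mul P hP.det_pos.ne'.isUnit, Matrix.mul_one]
  set Z := fromRows P Y with hZ
  have part1 : ∀ (Ab : Matrix (Fin n) (Fin n) ℝ) (Bb : Matrix (Fin n) (Fin m) ℝ),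
      (-(Sg + Upsᵀ * (fromCols Ab Bb)ᵀ + fromCols Ab Bb * Ups
          + fromCols Ab Bb * Psi * (fromCols Ab Bb)ᵀ)).PosSemidef →
      (-((Ab + Bb * K) * P + P * (Ab + Bb * K)ᵀ)).PosDef := by
    intro Ab Bb hcons
    set G := fromCols Ab Bb with hG
    set L : Matrix (Fin n ⊕ (Fin n ⊕ Fin m)) (Fin n) ℝ :=
      fromRows (1 : Matrix (Fin n) (Fin n) ℝ) (-Gᵀ) with hL
    have hinj : ∀ x : Fin n → ℝ, x ≠ 0 → L *ᵥ x ≠ 0 := by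
      intro x hx h0
      apply hx
      rw [hL, fromRows_mulVec] at h0
      have h1 : (1 : Matrix (Fin n) (Fin n) ℝ) *ᵥ x = 0 := by
        funext i
        exact congrFun h0 (Sum.inl i)
      simpa using h1
    have hC := congr_posDef hLMI L hinj
    have hLT : Lᵀ = fromCols (1 : Matrix (Fin n) (Fin n) ℝ) (-G) := by
      rw [hL, transpose_fromRows, transpose_neg, transpose_transpose, transpose_one]
    have hE : Lᵀ * (-(fromBlocks (-Sg) (Upsᵀ - Zᵀ) (Ups - Z) (-Psi))) * L
        = Sg + G * Ups - G * Z + Upsᵀ * Gᵀ - Zᵀ * Gᵀ + G * Psi * Gᵀ := by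
      have hneg : (-(fromBlocks (-Sg) (Upsᵀ - Zᵀ) (Ups - Z) (-Psi)))
          = fromBlocks Sg (-(Upsᵀ - Zᵀ)) (-(Ups - Z)) Psi := by
        rw [show (fromBlocks (-Sg) (Upsᵀ - Zᵀ) (Ups - Z) (-Psi))
            = fromBlocks (-Sg) (-(-(Upsᵀ - Zᵀ))) (-(-(Ups - Z))) (-Psi) by simp,
          ← Matrix.fromBlocks_neg, neg_neg]
      rw [hneg, hLT, hL, fromCols_mul_fromBlocks, fromCols_mul_fromRows]
      simp only [Matrix.one_mul, Matrix.mul_one, Matrix.neg_mul, Matrix.mul_neg,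
        Matrix.add_mul, Matrix.mul_add, Matrix.sub_mul, Matrix.mul_sub, neg_neg, neg_sub]
      abel
    rw [hE] at hC
    have e1 : (Ab + Bb * K) * P = G * Z := by
      rw [hG, hZ, fromCols_mul_fromRows, add_mul, Matrix.mul_assoc, hKP]
    have e2 : P * (Ab + Bb * K)ᵀ = (G * Z)ᵀ := by
      rw [← e1, transpose_mul, hPsymm]
    have efin : -((Ab + Bb * K) * P + P * (Ab + Bb * K)ᵀ)
        = (Sg + G * Ups - G * Z + Upsᵀ * Gᵀ - Zᵀ * Gᵀ + G * Psi * Gᵀ)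
          + (-(Sg + Upsᵀ * Gᵀ + G * Ups + G * Psi * Gᵀ)) := by
      rw [e1, e2, transpose_mul]
      abel
    rw [efin]
    exact hC.add_posSemidef hcons
  refine ⟨part1, ?_⟩
  have hcons : (-(Sg + Upsᵀ * (fromCols A B)ᵀ + fromCols A B * Ups
      + fromCols A B * Psi * (fromCols A B)ᵀ)).PosSemidef := by
    set G := fromCols A B with hG
    have hGW : G * W = A * Xim + B * Um := by
      rw [hG, hW, fromCols_mul_fromRows]
    have hXN : Xip - G * W = N := by
      rw [hGW, hdata]; abel
    have key : -(Sg + Upsᵀ * Gᵀ + G * Ups + G * Psi * Gᵀ)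
        = Δ * Δᵀ - (Xip - G * W) * (Xip - G * W)ᵀ := by
      rw [hSg, hUps, hPsi]
      simp only [transpose_neg, transpose_mul, transpose_sub, transpose_transpose]
      simp only [Matrix.mul_sub, Matrix.sub_mul, Matrix.neg_mul, Matrix.mul_neg,
        Matrix.mul_assoc, neg_neg, neg_sub]
      abel
    rw [key, hXN]
    exact hN
  have hQ := part1 A B hcons
  exact lyap_spectrum hP hQ
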